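/- For every real x with 0 < x < π/2, sin(x)/x > exp(-x²/4). -/

import Mathlib

open Real

lemma aux_exp_neg_lt {t : ℝ} (ht : 0 < t) : Real.exp (-t) < 1 - t + t ^ 2 / 2 := by
  have h : StrictMonoOn (fun s : ℝ => 1 - s + s ^ 2 / 2 - Real.exp (-s)) (Set.Ici 0) := by
    apply strictMonoOn_of_deriv_pos (convex_Ici 0)
    · fun_prop
    · intro y hy
      rw [interior_Ici] at hy
      have h1 : HasDerivAt (fun s : ℝ => Real.exp (-s)) (-Real.exp (-y)) y := by
        simpa using (hasDerivAt_neg y).exp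
      have h2 : HasDerivAt (fun s : ℝ => 1 - s + s ^ 2 / 2 - Real.exp (-s))
          (-1 + y + Real.exp (-y)) y := by
        have := (((hasDerivAt_const y (1:ℝ)).sub (hasDerivAt_id y)).add
          ((hasDerivAt_pow 2 y).div_const 2)).sub h1
        exact this.congr_deriv (by norm_num)
      rw [h2.deriv]
      replace hy : 0 < y := hy
      nlinarith [Real.add_one_lt_exp (show (-y : ℝ) ≠ 0 by linarith)]
  have := h Set.self_mem_Ici (Set.mem_Ici.2 ht.le) ht
  simp [Real.exp_zero] at this
  linarith

lemma aux_sin_ge {x : ℝ} (hx : 0 ≤ x) : x - x ^ 3 / 6 ≤ Real.sin x := by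
  have h : MonotoneOn (fun y : ℝ => Real.sin y - y + y ^ 3 / 6) (Set.Ici 0) := by
    apply monotoneOn_of_deriv_nonneg (convex_Ici 0)
    · fun_prop
    · fun_prop
    · intro y hy
      rw [interior_Ici] at hy
      have h2 : HasDerivAt (fun y : ℝ => Real.sin y - y + y ^ 3 / 6)
          (Real.cos y - 1 + y ^ 2 / 2) y := by
        have := ((Real.hasDerivAt_sin y).sub (hasDerivAt_id y)).add
          ((hasDerivAt_pow 3 y).div_const 6)
        exact this.congr_deriv (by norm_num; ring)
      rw [h2.deriv]
      nlinarith [Real.one_sub_sq_div_two_le_cos (x := y)]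
  have := h Set.self_mem_Ici (Set.mem_Ici.2 hx) hx
  simp at this
  linarith

theorem stmt_4 (x : ℝ) (hx0 : 0 < x) (hx : x < Real.pi / 2) :
    Real.sin x / x > Real.exp (-x ^ 2 / 4) := by
  have h1 : x - x ^ 3 / 6 ≤ Real.sin x := aux_sin_ge hx0.le
  have h2 : Real.exp (-(x ^ 2 / 4)) < 1 - x ^ 2 / 4 + (x ^ 2 / 4) ^ 2 / 2 :=
    aux_exp_neg_lt (by positivity)
  have hpi : Real.pi < 3.15 := Real.pi_lt_d2
  have hx2 : x < 1.575 := by linarith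
  rw [gt_iff_lt, neg_div, lt_div_iff₀ hx0]
  have key : rexp (-(x ^ 2 / 4)) * x < (1 - x ^ 2 / 4 + (x ^ 2 / 4) ^ 2 / 2) * x :=
    mul_lt_mul_of_pos_right h2 hx0
  have hcube : 0 < x ^ 3 := by positivity
  nlinarith [key, h1, hcube, sq_nonneg x, mul_pos hx0 hx0, mul_lt_mul_of_pos_left (show x * x < 2.480625 by nlinarith) hcube]
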